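/- Let S ⊆ ℤ be such that S ∪ (−S) generates ℤ, and let d_S be the associated word metric on ℤ. If there exists δ ≥ 0 such that (ℤ, d_S) is δ-hyperbolic, then either S is finite, or ℤ has finite diameter with respect to d_S. -/

import Mathlib

/-- Word metric on ℤ associated to a subset `S ⊆ ℤ`: the least `k` such that `n − m` is a
sum of `k` elements of `S ∪ (−S)`. -/
noncomputable def wordDistZ (S : Set ℤ) (m n : ℤ) : ℕ :=
  sInf {k : ℕ | ∃ l : List ℤ, l.length = k ∧ (∀ x ∈ l, x ∈ S ∨ -x ∈ S) ∧ n - m = l.sum}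

/-- Gromov product for the word metric on ℤ. -/
noncomputable def gpZ (S : Set ℤ) (x y w : ℤ) : ℝ :=
  ((wordDistZ S x w : ℝ) + (wordDistZ S y w : ℝ) - (wordDistZ S x y : ℝ)) / 2

namespace Stmt5

/-- the norm -/
noncomputable def N (S : Set ℤ) (x : ℤ) : ℕ := wordDistZ S 0 x

lemma wordDistZ_eq_N (S : Set ℤ) (a b : ℤ) : wordDistZ S a b = N S (b - a) := by
  simp only [wordDistZ, N, sub_zero]

lemma N_le (S : Set ℤ) (x : ℤ) (l : List ℤ) (hl : ∀ a ∈ l, a ∈ S ∨ -a ∈ S)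
    (hs : x = l.sum) : N S x ≤ l.length :=
  Nat.sInf_le ⟨l, rfl, hl, by simpa using hs⟩

lemma N_zero (S : Set ℤ) : N S 0 = 0 :=
  Nat.le_zero.mp (N_le S 0 [] (by simp) (by simp))

section
variable {S : Set ℤ} (hgen : ∀ n : ℤ, ∃ l : List ℤ, (∀ x ∈ l, x ∈ S ∨ -x ∈ S) ∧ n = l.sum)

include hgen in
lemma exists_list (x : ℤ) :
    ∃ l : List ℤ, l.length = N S x ∧ (∀ a ∈ l, a ∈ S ∨ -a ∈ S) ∧ x = l.sum := by
  have hne : {k : ℕ | ∃ l : List ℤ, l.length = k ∧ (∀ a ∈ l, a ∈ S ∨ -a ∈ S) ∧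
      x - 0 = l.sum}.Nonempty := by
    obtain ⟨l, hl, hs⟩ := hgen x
    exact ⟨l.length, l, rfl, hl, by simpa using hs⟩
  have := Nat.sInf_mem hne
  obtain ⟨l, h1, h2, h3⟩ := this
  exact ⟨l, h1, h2, by simpa using h3⟩

lemma N_neg_le (S : Set ℤ) (x : ℤ)
    (l : List ℤ) (h1 : l.length = N S x) (h2 : ∀ a ∈ l, a ∈ S ∨ -a ∈ S) (h3 : x = l.sum) :
    N S (-x) ≤ N S x := by
  have := N_le S (-x) (l.map (fun a => -a)) ?_ ?_
  · simpa [h1] using this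
  · intro a ha
    simp only [List.mem_map] at ha
    obtain ⟨b, hb, rfl⟩ := ha
    rcases h2 b hb with h | h
    · right; simpa using h
    · left; exact h
  · have key : ∀ t : List ℤ, -t.sum = (t.map (fun a => -a)).sum := by
      intro t
      induction t with
      | nil => simp
      | cons a t ih => simp [ih, neg_add, add_comm]
    rw [h3, key]

include hgen in
lemma N_neg (x : ℤ) : N S (-x) = N S x := by
  obtain ⟨l, h1, h2, h3⟩ := exists_list hgen x
  obtain ⟨l', h1', h2', h3'⟩ := exists_list hgen (-x)
  have a := N_neg_le S x l h1 h2 h3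
  have b := N_neg_le S (-x) l' h1' h2' h3'
  simp only [neg_neg] at b
  omega

include hgen in
lemma N_add_le (x y : ℤ) : N S (x + y) ≤ N S x + N S y := by
  obtain ⟨l, h1, h2, h3⟩ := exists_list hgen x
  obtain ⟨l', h1', h2', h3'⟩ := exists_list hgen y
  have := N_le S (x + y) (l ++ l') ?_ ?_
  · simpa [h1, h1'] using this
  · intro a ha; rcases List.mem_append.mp ha with h | h
    · exact h2 a h
    · exact h2' a h
  · simp [h3, h3']

end

lemma gp_eq (S : Set ℤ) (a b w : ℤ) :
    gpZ S a b w = ((N S (w - a) : ℝ) + (N S (w - b) : ℝ) - (N S (b - a) : ℝ)) / 2 := by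
  rw [gpZ, wordDistZ_eq_N S a w, wordDistZ_eq_N S b w, wordDistZ_eq_N S a b]

section Main
variable {S : Set ℤ} (hgen : ∀ n : ℤ, ∃ l : List ℤ, (∀ x ∈ l, x ∈ S ∨ -x ∈ S) ∧ n = l.sum)
  {δ : ℝ} (hδ : 0 ≤ δ)
  (hhyp : ∀ x y z w : ℤ, min (gpZ S x z w) (gpZ S y z w) - δ ≤ gpZ S x y w)

include hgen hδ hhyp in
lemma doubling (x : ℤ) (hx : 6 * δ + 2 < (N S x : ℝ)) :
    2 * (N S x : ℝ) - 4 * δ - 2 ≤ (N S (2 * x) : ℝ) := by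
  by_contra hcon
  push_neg at hcon
  set m : ℕ := N S x with hm
  set B : ℝ := (m : ℝ) - (N S (2 * x) : ℝ) / 2 with hB
  have hBpos : 2 * δ + 1 < B := by
    rw [hB]; linarith
  have hBm : B ≤ (m : ℝ) := by
    have : (0 : ℝ) ≤ (N S (2 * x) : ℝ) := Nat.cast_nonneg _
    rw [hB]; linarith
  -- choice of j
  set j : ℕ := min ⌊B⌋₊ (m / 2) with hj
  have hjB : (j : ℝ) ≤ B := by
    have h1 : (j : ℕ) ≤ ⌊B⌋₊ := min_le_left _ _
    have h2 : (⌊B⌋₊ : ℝ) ≤ B := Nat.floor_le (by linarith)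
    calc (j : ℝ) ≤ (⌊B⌋₊ : ℝ) := by exact_mod_cast h1
      _ ≤ B := h2
  have hjm2 : 2 * j ≤ m := by
    have : j ≤ m / 2 := min_le_right _ _
    omega
  have hjgt : 2 * δ < (j : ℝ) := by
    have hf : 2 * δ < (⌊B⌋₊ : ℝ) := by
      have := Nat.lt_floor_add_one B
      linarith
    have hd : 2 * δ < ((m / 2 : ℕ) : ℝ) := by
      have h1 : m = 2 * (m / 2) + m % 2 := (Nat.div_add_mod m 2).symm ▸ by omega
      have h2 : (m : ℝ) ≤ 2 * ((m / 2 : ℕ) : ℝ) + 1 := by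
        have : m ≤ 2 * (m / 2) + 1 := by omega
        exact_mod_cast this
      linarith
    have : (j : ℝ) = min ((⌊B⌋₊ : ℕ) : ℝ) (((m / 2 : ℕ)) : ℝ) := by
      exact_mod_cast rfl
    rw [this]
    exact lt_min hf hd
  -- geodesic list
  obtain ⟨l, hlen, hgens, hsum⟩ := exists_list hgen x
  set p : ℕ → ℤ := fun i => (l.take i).sum with hp
  have hNp : ∀ i, i ≤ m → N S (p i) = i ∧ N S (x - p i) = m - i := by
    intro i him
    have h1 : N S (p i) ≤ i := by
      have := N_le S (p i) (l.take i) (fun a ha => hgens a ((l.take_sublist i).subset ha)) rfl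
      exact this.trans (List.length_take_le i l)
    have h2 : N S (x - p i) ≤ m - i := by
      have hs : x - p i = (l.drop i).sum := by
        have := List.sum_take_add_sum_drop l i
        rw [hp]; simp only []
        rw [hsum]; linarith [this]
      have := N_le S (x - p i) (l.drop i) (fun a ha => hgens a ((l.drop_sublist i).subset ha)) hs
      simpa [List.length_drop, hlen] using this
    have h3 : m ≤ N S (p i) + N S (x - p i) := by
      have := N_add_le hgen (p i) (x - p i)
      simpa [hm] using this
    omega
  have hmid : N S (p (m - j) - p j) ≤ m - 2 * j := by
    have hsub : p (m - j) - p j = ((l.take (m - j)).drop j).sum := by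
      have h1 := List.sum_take_add_sum_drop (l.take (m - j)) j
      have h2 : (l.take (m - j)).take j = l.take j := by
        rw [List.take_take, min_eq_left (by omega)]
      rw [h2] at h1
      rw [hp]; simp only []
      linarith [h1]
    have hmem : ∀ a ∈ (l.take (m - j)).drop j, a ∈ S ∨ -a ∈ S := by
      intro a ha
      exact hgens a ((l.take_sublist (m - j)).subset (((l.take (m - j)).drop_sublist j).subset ha))
    have := N_le S _ _ hmem hsub
    have hlen2 : ((l.take (m - j)).drop j).length = m - j - j := by
      simp [List.length_drop, List.length_take, hlen]; omega
    rw [hlen2] at this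
    omega
  obtain ⟨hNp1, hNp2⟩ := hNp j (by omega)
  obtain ⟨hNq1, hNq2⟩ := hNp (m - j) (by omega)
  -- basepoint x, points a := p (m-j), b := x + p j
  set a : ℤ := p (m - j) with ha
  set b : ℤ := x + p j with hb
  -- relevant norm values, as reals
  have hNneg : ∀ y : ℤ, N S (-y) = N S y := N_neg hgen
  have cast_sub : ((m - j : ℕ) : ℝ) = (m : ℝ) - j := Nat.cast_sub (by omega)
  have e1 : gpZ S a 0 x = (j : ℝ) := by
    rw [gp_eq]
    have v1 : N S (x - a) = j := by
      rw [ha]; have : x - p (m - j) = x - p (m - j) := rfl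
      rw [hNq2]; omega
    have v2 : N S (x - 0) = m := by simpa using hm.symm
    have v3 : N S (0 - a) = m - j := by
      rw [ha, zero_sub, hNneg, hNq1]
    rw [v1, v2, v3, cast_sub]; ring
  have e2 : gpZ S (2 * x) 0 x = B := by
    rw [gp_eq]
    have v1 : N S (x - 2 * x) = m := by
      have : x - 2 * x = -x := by ring
      rw [this, hNneg]
    have v2 : N S (x - 0) = m := by simpa using hm.symm
    have v3 : N S (0 - 2 * x) = N S (2 * x) := by rw [zero_sub, hNneg]
    rw [v1, v2, v3, hB]; ring
  have e3 : gpZ S b (2 * x) x = (j : ℝ) := by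
    rw [gp_eq]
    have v1 : N S (x - b) = j := by
      rw [hb]
      have : x - (x + p j) = -(p j) := by ring
      rw [this, hNneg, hNp1]
    have v2 : N S (x - 2 * x) = m := by
      have : x - 2 * x = -x := by ring
      rw [this, hNneg]
    have v3 : N S (2 * x - b) = m - j := by
      rw [hb]
      have : 2 * x - (x + p j) = x - p j := by ring
      rw [this, hNp2]
    rw [v1, v2, v3, cast_sub]; ring
  -- step 1
  have s1 := hhyp a (2 * x) 0 x
  rw [e1, e2] at s1
  have hs1 : (j : ℝ) - δ ≤ gpZ S a (2 * x) x := by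
    have : min ((j : ℝ)) B = (j : ℝ) := min_eq_left hjB
    rw [this] at s1; exact s1
  -- step 2
  have s2 := hhyp a b (2 * x) x
  rw [e3] at s2
  have hs2 : (j : ℝ) - 2 * δ ≤ gpZ S a b x := by
    have hmin : (j : ℝ) - δ ≤ min (gpZ S a (2 * x) x) ((j : ℝ)) := le_min hs1 (by linarith)
    linarith
  -- conclude N(b - a) ≤ 4δ
  have e4 : gpZ S a b x = ((j : ℝ) + (j : ℝ) - (N S (b - a) : ℝ)) / 2 := by
    rw [gp_eq]
    have v1 : N S (x - a) = j := by rw [ha, hNq2]; omega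
    have v2 : N S (x - b) = j := by
      rw [hb]
      have : x - (x + p j) = -(p j) := by ring
      rw [this, hNneg, hNp1]
    rw [v1, v2]
  have hba : (N S (b - a) : ℝ) ≤ 4 * δ := by
    rw [e4] at hs2; linarith
  -- final contradiction
  have hfin : m ≤ N S (b - a) + N S (p (m - j) - p j) := by
    have hx2 : x = (b - a) + (p (m - j) - p j) := by rw [ha, hb]; ring
    have := N_add_le hgen (b - a) (p (m - j) - p j)
    rw [← hx2] at this
    simpa [hm] using this
  have hcast : ((m - 2 * j : ℕ) : ℝ) = (m : ℝ) - 2 * (j : ℝ) := by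
    push_cast [Nat.cast_sub hjm2]; ring
  have : (m : ℝ) ≤ 4 * δ + ((m : ℝ) - 2 * (j : ℝ)) := by
    have h1 : (N S (p (m - j) - p j) : ℝ) ≤ (m : ℝ) - 2 * j := by
      have := hmid
      calc (N S (p (m - j) - p j) : ℝ) ≤ ((m - 2 * j : ℕ) : ℝ) := by exact_mod_cast this
        _ = (m : ℝ) - 2 * j := hcast
    have h2 : (m : ℝ) ≤ (N S (b - a) : ℝ) + (N S (p (m - j) - p j) : ℝ) := by
      exact_mod_cast hfin
    linarith
  linarith

include hgen hδ hhyp in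
lemma chain (x : ℤ) (hx : 6 * δ + 2 < (N S x : ℝ)) :
    ∀ q : ℕ, (q : ℝ) * ((N S x : ℝ) - 6 * δ - 2) ≤ (N S ((q : ℤ) * x) : ℝ) := by
  have hNneg : ∀ y : ℤ, N S (-y) = N S y := N_neg hgen
  obtain ⟨m, hm⟩ : ∃ r : ℝ, r = (N S x : ℝ) := ⟨_, rfl⟩
  obtain ⟨B, hB⟩ : ∃ r : ℝ, r = m - (N S (2 * x) : ℝ) / 2 := ⟨_, rfl⟩
  rw [← hm] at hx
  have hBle : B ≤ 2 * δ + 1 := by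
    have := doubling hgen hδ hhyp x (by rw [← hm]; exact hx)
    rw [hB, hm]; linarith
  obtain ⟨D, hD⟩ : ∃ D : ℤ → ℝ, ∀ k : ℤ, D k = (N S (k * x) : ℝ) := ⟨_, fun _ => rfl⟩
  have gp0 : ∀ k : ℤ, gpZ S (k * x) 0 ((k + 1) * x) = (m + D (k + 1) - D k) / 2 := by
    intro k
    rw [gp_eq]
    have v1 : (k + 1) * x - k * x = x := by ring
    have v2 : (k + 1) * x - 0 = (k + 1) * x := by ring
    have v3 : (0 : ℤ) - k * x = -(k * x) := by ring
    rw [v1, v2, v3, hNneg]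
    rw [hD, hD, hm]
  have gp2 : ∀ k : ℤ, gpZ S ((k + 1 + 1) * x) 0 ((k + 1) * x)
      = (m + D (k + 1) - D (k + 1 + 1)) / 2 := by
    intro k
    rw [gp_eq]
    have v1 : (k + 1) * x - (k + 1 + 1) * x = -x := by ring
    have v2 : (k + 1) * x - 0 = (k + 1) * x := by ring
    have v3 : (0 : ℤ) - (k + 1 + 1) * x = -((k + 1 + 1) * x) := by ring
    rw [v1, v2, v3, hNneg, hNneg]
    rw [hD, hD, hm]
  have gpB : ∀ k : ℤ, gpZ S (k * x) ((k + 1 + 1) * x) ((k + 1) * x) = B := by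
    intro k
    rw [gp_eq]
    have v1 : (k + 1) * x - k * x = x := by ring
    have v2 : (k + 1) * x - (k + 1 + 1) * x = -x := by ring
    have v3 : (k + 1 + 1) * x - k * x = 2 * x := by ring
    rw [v1, v2, v3, hNneg, hB, hm]
    ring
  have hmB : 2 * B + 2 * δ < m := by linarith
  have hu : ∀ q : ℕ, 1 ≤ q → D (q : ℤ) + m - D ((q : ℤ) + 1) ≤ 2 * B + 2 * δ := by
    intro q hq
    induction q, hq using Nat.le_induction with
    | base =>
      have h1 : D ((1 : ℕ) : ℤ) = m := by
        rw [hD, hm]; norm_num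
      have h2 : D (((1 : ℕ) : ℤ) + 1) = 2 * m - 2 * B := by
        rw [hD, hB, hm]
        have : (((1 : ℕ) : ℤ) + 1) * x = 2 * x := by push_cast; ring
        rw [this]; ring
      rw [h1, h2]; linarith
    | succ q hq ih =>
      have key := hhyp ((q : ℤ) * x) (((q : ℤ) + 1 + 1) * x) 0 (((q : ℤ) + 1) * x)
      rw [gp0 (q : ℤ), gp2 (q : ℤ), gpB (q : ℤ)] at key
      have hA : B + δ < (m + D ((q : ℤ) + 1) - D (q : ℤ)) / 2 := by linarith
      by_contra hcon
      push_neg at hcon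
      have hcon' : B + δ < (m + D ((q : ℤ) + 1) - D ((q : ℤ) + 1 + 1)) / 2 := by
        push_cast at hcon
        linarith
      have := lt_min hA hcon'
      linarith
  have hgrow : ∀ q : ℕ, 1 ≤ q → m + ((q : ℝ) - 1) * (m - 6 * δ - 2) ≤ D (q : ℤ) := by
    intro q hq
    induction q, hq using Nat.le_induction with
    | base =>
      have h1 : D ((1 : ℕ) : ℤ) = m := by
        rw [hD, hm]; norm_num
      rw [h1]; norm_num
    | succ q hq ih =>
      have h := hu q hq
      push_cast
      have h2 : m - 6 * δ - 2 ≤ m - 2 * B - 2 * δ := by linarith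
      have h3 : D ((q : ℤ) + 1) ≥ D (q : ℤ) + m - 2 * B - 2 * δ := by linarith
      push_cast at ih
      nlinarith [ih, h3, h2]
  intro q
  rcases Nat.eq_zero_or_pos q with h | h
  · subst h
    simp only [Nat.cast_zero, zero_mul]
    exact Nat.cast_nonneg _
  · have h1 := hgrow q h
    have h3 : (1 : ℝ) ≤ (q : ℝ) := by exact_mod_cast h
    rw [← hm, ← hD ((q : ℕ) : ℤ)]
    have : (q : ℝ) * (m - 6 * δ - 2) ≤ m + ((q : ℝ) - 1) * (m - 6 * δ - 2) := by nlinarith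
    exact le_trans this h1

end Main

end Stmt5

/-- if a Cayley graph of ℤ is δ-hyperbolic, then either the generating set is
finite or the Cayley graph has finite diameter. -/
theorem stmt_5 (S : Set ℤ)
    -- S ∪ (−S) generates ℤ
    (hgen : ∀ n : ℤ, ∃ l : List ℤ, (∀ x ∈ l, x ∈ S ∨ -x ∈ S) ∧ n = l.sum)
    (δ : ℝ) (hδ : 0 ≤ δ)
    -- (ℤ, d_S) is δ-hyperbolic
    (hhyp : ∀ x y z w : ℤ, min (gpZ S x z w) (gpZ S y z w) - δ ≤ gpZ S x y w) :
    S.Finite ∨ ∃ D : ℝ, ∀ m n : ℤ, (wordDistZ S m n : ℝ) ≤ D := by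
  by_cases hb : ∃ D : ℝ, ∀ m n : ℤ, (wordDistZ S m n : ℝ) ≤ D
  · exact Or.inr hb
  left
  push_neg at hb
  obtain ⟨m0, n0, hx0⟩ := hb (6 * δ + 2)
  rw [Stmt5.wordDistZ_eq_N] at hx0
  have hNneg : ∀ y : ℤ, Stmt5.N S (-y) = Stmt5.N S y := Stmt5.N_neg hgen
  set x : ℤ := |n0 - m0| with hxdef
  have hNx : 6 * δ + 2 < (Stmt5.N S x : ℝ) := by
    rcases abs_choice (n0 - m0) with h | h
    · rw [hxdef, h]; exact hx0
    · rw [hxdef, h, hNneg]; exact hx0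
  have hxpos : 0 < x := by
    rcases (abs_nonneg (n0 - m0)).lt_or_eq with h | h
    · exact h
    · exfalso
      rw [hxdef, ← h, Stmt5.N_zero] at hNx
      norm_num at hNx
      linarith
  have hchain := Stmt5.chain hgen hδ hhyp x hNx
  set ε : ℝ := (Stmt5.N S x : ℝ) - 6 * δ - 2 with hε
  have hεpos : 0 < ε := by rw [hε]; linarith
  -- lower bound for all integer multiples
  have hall : ∀ q : ℤ, (q.natAbs : ℝ) * ε ≤ (Stmt5.N S (q * x) : ℝ) := by
    intro q
    have h1 := hchain q.natAbs
    rcases Int.natAbs_eq q with h | h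
    · rw [← h] at h1; exact h1
    · have h2 : Stmt5.N S (q * x) = Stmt5.N S ((q.natAbs : ℤ) * x) := by
        nth_rewrite 1 [h]
        rw [show (-(q.natAbs : ℤ)) * x = -((q.natAbs : ℤ) * x) by ring, hNneg]
      rw [h2]; exact h1
  -- upper bound for small numbers
  set c1 : ℕ := Stmt5.N S 1 with hc1
  have hsmall : ∀ k : ℕ, Stmt5.N S (k : ℤ) ≤ k * c1 := by
    intro k
    induction k with
    | zero => simpa using Stmt5.N_zero S
    | succ k ih =>
      have h1 := Stmt5.N_add_le hgen (k : ℤ) 1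
      have h2 : ((k + 1 : ℕ) : ℤ) = (k : ℤ) + 1 := by push_cast; ring
      rw [h2]
      calc Stmt5.N S ((k : ℤ) + 1) ≤ Stmt5.N S (k : ℤ) + Stmt5.N S 1 := h1
        _ ≤ k * c1 + c1 := Nat.add_le_add ih le_rfl
        _ = (k + 1) * c1 := by ring
  -- bound the generators
  set M : ℕ := 1 + x.natAbs * c1 with hM
  set R : ℝ := (x : ℝ) * ((M : ℝ) / ε) + (x : ℝ) with hR
  apply Set.Finite.subset (Set.finite_Icc (-(⌈R⌉₊ : ℤ)) (⌈R⌉₊ : ℤ))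
  intro s hs
  set q : ℤ := s / x with hq
  set r : ℤ := s % x with hr
  have hqr : x * q + r = s := Int.mul_ediv_add_emod s x
  have hr0 : 0 ≤ r := Int.emod_nonneg s (ne_of_gt hxpos)
  have hrx : r < x := Int.emod_lt_of_pos s hxpos
  have hNs : Stmt5.N S s ≤ 1 := by
    have := Stmt5.N_le S s [s] ?_ (by simp)
    · simpa using this
    · intro a ha
      simp only [List.mem_singleton] at ha
      subst ha
      exact Or.inl hs
  have hNr : Stmt5.N S r ≤ x.natAbs * c1 := by
    have h1 : r = ((r.toNat : ℕ) : ℤ) := (Int.toNat_of_nonneg hr0).symm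
    have h2 := hsmall r.toNat
    rw [← h1] at h2
    have h3 : r.toNat ≤ x.natAbs := by omega
    calc Stmt5.N S r ≤ r.toNat * c1 := h2
      _ ≤ x.natAbs * c1 := Nat.mul_le_mul_right c1 h3
  have hNqx : Stmt5.N S (q * x) ≤ Stmt5.N S s + Stmt5.N S r := by
    have h1 : q * x = s + (-r) := by rw [← hqr]; ring
    have h2 := Stmt5.N_add_le hgen s (-r)
    rw [hNneg] at h2
    rw [h1]; exact h2
  have hNq : (q.natAbs : ℝ) * ε ≤ (M : ℝ) := by
    have h1 := hall q
    have h2 : (Stmt5.N S (q * x) : ℝ) ≤ (M : ℝ) := by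
      have h3 : Stmt5.N S (q * x) ≤ M := by
        refine le_trans hNqx ?_
        rw [hM]
        exact Nat.add_le_add hNs hNr
      exact_mod_cast h3
    linarith
  have hqM : (q.natAbs : ℝ) ≤ (M : ℝ) / ε := (le_div_iff₀ hεpos).mpr hNq
  -- |s| ≤ x * |q| + x
  have habs : |s| ≤ x * |q| + x := by
    have h1 : |s| ≤ |x * q| + |r| := by rw [← hqr]; exact abs_add_le _ _
    rw [abs_mul, abs_of_pos hxpos, abs_of_nonneg hr0] at h1
    linarith
  have hqabs : |(q : ℝ)| ≤ (M : ℝ) / ε := by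
    have e : |(q : ℝ)| = (q.natAbs : ℝ) := by
      rw [Nat.cast_natAbs, Int.cast_abs]
    rw [e]
    exact hqM
  have hsR : |(s : ℝ)| ≤ R := by
    have h1 : ((|s| : ℤ) : ℝ) ≤ (((x * |q| + x) : ℤ) : ℝ) := Int.cast_le.mpr habs
    push_cast at h1
    have h2 : (x : ℝ) * |(q : ℝ)| ≤ (x : ℝ) * ((M : ℝ) / ε) := by
      apply mul_le_mul_of_nonneg_left hqabs
      exact_mod_cast le_of_lt hxpos
    rw [hR]; linarith
  have hsK : |s| ≤ (⌈R⌉₊ : ℤ) := by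
    have h3 : |(s : ℝ)| ≤ ((⌈R⌉₊ : ℤ) : ℝ) := by
      push_cast
      exact le_trans hsR (Nat.le_ceil R)
    exact_mod_cast h3
  exact Set.mem_Icc.mpr (abs_le.mp hsK)
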